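/- Let A be a unital C*-algebra and E a full Hilbert A-module, i.e. the closed linear span of {⟨x,y⟩ : x,y ∈ E} equals A. Then there exist n ∈ ℕ and elements e₁, …, eₙ ∈ E with Σ_{i=1}^n ⟨eᵢ, eᵢ⟩ = 1_A; consequently the map φ : A → Eⁿ, φ(a) = (a e₁, …, a eₙ), is an isometric A-module map (⟨φ(a), φ(b)⟩ = a b*). -/

import Mathlib

open scoped RightActions InnerProductSpace
open WithCStarModule

/-- The notion `CStarModule` as it stood in the older Mathlib (right modules, with an action of
`Aᵐᵒᵖ`, inner product `A`-linear on the right); Mathlib's `CStarModule` now means a left module. -/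
class OldCStarModule (A E : Type*) [NonUnitalSemiring A] [StarRing A]
    [Module ℂ A] [AddCommGroup E] [Module ℂ E] [PartialOrder A] [SMul Aᵐᵒᵖ E] [Norm A] [Norm E]
    extends Inner A E where
  inner_add_right {x} {y} {z} : inner x (y + z) = inner x y + inner x z
  inner_self_nonneg {x} : 0 ≤ inner x x
  inner_self {x} : inner x x = 0 ↔ x = 0
  inner_op_smul_right {a : A} {x y : E} : inner x (y <• a) = inner x y * a
  inner_smul_right_complex {z : ℂ} {x} {y} : inner x (z • y) = z • inner x y
  star_inner x y : star (inner x y) = inner y x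
  norm_eq_sqrt_norm_inner_self x : ‖x‖ = √‖inner x x‖

/-- The old `A`-valued inner product on the finite product `C⋆ᵐᵒᵈ (Π i, E i)`. -/
instance OldCStarModule.piInner {A : Type*} [NonUnitalSemiring A] [StarRing A] [Module ℂ A]
    [PartialOrder A] [Norm A] {ι : Type*} [Fintype ι] {E : ι → Type*}
    [∀ i, AddCommGroup (E i)] [∀ i, Module ℂ (E i)] [∀ i, SMul Aᵐᵒᵖ (E i)] [∀ i, Norm (E i)]
    [∀ i, OldCStarModule A (E i)] : Inner A (WithCStarModule A (Π i, E i)) where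
  inner x y := ∑ i, inner A (equiv A _ x i) (equiv A _ y i)

/-- The old norm on the finite product `C⋆ᵐᵒᵈ (Π i, E i)`. -/
noncomputable instance OldCStarModule.piNorm {A : Type*} [NonUnitalSemiring A] [StarRing A]
    [Module ℂ A] [PartialOrder A] [Norm A] {ι : Type*} [Fintype ι] {E : ι → Type*}
    [∀ i, AddCommGroup (E i)] [∀ i, Module ℂ (E i)] [∀ i, SMul Aᵐᵒᵖ (E i)] [∀ i, Norm (E i)]
    [∀ i, OldCStarModule A (E i)] : Norm (WithCStarModule A (Π i, E i)) where
  norm x := √‖∑ i, inner A (equiv A _ x i) (equiv A _ x i)‖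

section oldaux

variable {A : Type*} [CStarAlgebra A] [PartialOrder A]
    {E : Type*} [NormedAddCommGroup E] [NormedSpace ℂ E] [SMul Aᵐᵒᵖ E] [OldCStarModule A E]

lemma old_inner_add_left {x y z : E} : ⟪x + y, z⟫_A = ⟪x, z⟫_A + ⟪y, z⟫_A := by
  rw [← OldCStarModule.star_inner, OldCStarModule.inner_add_right, star_add,
    OldCStarModule.star_inner, OldCStarModule.star_inner]

lemma old_inner_smul_left_complex {c : ℂ} {x y : E} : ⟪c • x, y⟫_A = star c • ⟪x, y⟫_A := by
  rw [← OldCStarModule.star_inner, OldCStarModule.inner_smul_right_complex, star_smul,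
    OldCStarModule.star_inner]

lemma old_inner_op_smul_left {a : A} {x y : E} : ⟪x <• a, y⟫_A = star a * ⟪x, y⟫_A := by
  rw [← OldCStarModule.star_inner, OldCStarModule.inner_op_smul_right, star_mul,
    OldCStarModule.star_inner]

lemma old_pi_inner {n : ℕ} (x y : WithCStarModule A (Fin n → E)) :
    ⟪x, y⟫_A = ∑ i, ⟪equiv A _ x i, equiv A _ y i⟫_A := rfl

lemma old_pi_norm_sq {n : ℕ} (x : WithCStarModule A (Fin n → E)) :
    ‖x‖ ^ 2 = ‖⟪x, x⟫_A‖ := Real.sq_sqrt (norm_nonneg _)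

end oldaux

section aux

variable {A : Type*} [CStarAlgebra A] [PartialOrder A] [StarOrderedRing A]

lemma aux_algebraMap_nonneg {c : ℝ} (hc : 0 ≤ c) : (0:A) ≤ algebraMap ℝ A c := by
  have h : algebraMap ℝ A c = star (algebraMap ℝ A (Real.sqrt c)) * algebraMap ℝ A (Real.sqrt c) := by
    rw [← algebraMap_star_comm, star_trivial, ← map_mul, Real.mul_self_sqrt hc]
  rw [h]
  exact star_mul_self_nonneg _

lemma aux_spectrum_Ici {s : A} (h1 : algebraMap ℝ A (3/2) ≤ s) :
    spectrum ℝ s ⊆ Set.Ici (3/2) := by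
  intro x hx
  have hp : 0 ≤ s - algebraMap ℝ A (3/2) := sub_nonneg.mpr h1
  have h2 := spectrum.add_singleton_eq (R := ℝ) (s - algebraMap ℝ A (3/2)) (3/2)
  rw [sub_add_cancel] at h2
  rw [← h2] at hx
  obtain ⟨y, hy, z, hz, rfl⟩ := Set.mem_add.mp hx
  have := spectrum_nonneg_of_nonneg hp hy
  simp only [Set.mem_singleton_iff] at hz
  simp only [hz, Set.mem_Ici]
  linarith

lemma aux_inv_sqrt {s : A} (hsa : IsSelfAdjoint s) (hspec : spectrum ℝ s ⊆ Set.Ici (3/2)) :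
    ∃ r : A, IsSelfAdjoint r ∧ r * s * r = 1 := by
  have hcont : ContinuousOn (fun x : ℝ => (Real.sqrt x)⁻¹) (spectrum ℝ s) := by
    apply ContinuousOn.inv₀
    · exact Real.continuous_sqrt.continuousOn
    · intro x hx
      have h := hspec hx
      simp only [Set.mem_Ici] at h
      have : (0:ℝ) < x := by linarith
      positivity
  refine ⟨cfc (fun x : ℝ => (Real.sqrt x)⁻¹) s, cfc_predicate _ s, ?_⟩
  nth_rewrite 2 [← cfc_id ℝ s]
  rw [← cfc_mul _ _ s hcont (by fun_prop), ← cfc_mul _ _ s (by fun_prop) hcont]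
  rw [← cfc_one (R := ℝ) s]
  apply cfc_congr
  intro x hx
  have hx' : (3:ℝ)/2 ≤ x := hspec hx
  have hxpos : 0 < x := by linarith
  have hs : Real.sqrt x > 0 := Real.sqrt_pos.mpr hxpos
  simp only [Pi.one_apply, id]
  field_simp
  rw [Real.sq_sqrt hxpos.le]

end aux

/-- Let `A` be a unital C*-algebra and `E` a full Hilbert `A`-module (the closed linear
span of the inner products equals `A`). Then there exist `n ∈ ℕ` and `e₁, …, eₙ ∈ E` with
`Σᵢ ⟨eᵢ, eᵢ⟩ = 1`, and consequently the map `φ : A → Eⁿ`, `φ(a) = (a e₁, …, a eₙ)`, is an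
isometric `A`-module map with `⟨φ(a), φ(b)⟩ = ⟨a, b⟩_A`. -/
theorem stmt_18 {A : Type*} [CStarAlgebra A] [PartialOrder A] [StarOrderedRing A]
    {E : Type*} [NormedAddCommGroup E] [NormedSpace ℂ E] [SMul Aᵐᵒᵖ E] [OldCStarModule A E]
    [CompleteSpace E]
    (hfull : (Submodule.span ℂ {a : A | ∃ x y : E, a = ⟪x, y⟫_A}).topologicalClosure = ⊤) :
    ∃ (n : ℕ) (e : Fin n → E),
      (∑ i, ⟪e i, e i⟫_A) = 1 ∧
      (∀ a b : A,
        ⟪(equiv A (Fin n → E)).symm (fun i => e i <• a),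
          (equiv A (Fin n → E)).symm (fun i => e i <• b)⟫_A = star a * b) ∧
      (∀ a : A, ‖(equiv A (Fin n → E)).symm (fun i => e i <• a)‖ = ‖a‖) := by
  classical
  -- Step 1: find an element of the span close to 1
  set S : Set A := {a : A | ∃ x y : E, a = ⟪x, y⟫_A} with hS
  have h1 : (1 : A) ∈ closure (Submodule.span ℂ S : Set A) := by
    have : (1 : A) ∈ (Submodule.span ℂ S).topologicalClosure := by
      rw [hfull]; trivial
    exact this
  rw [Metric.mem_closure_iff] at h1
  obtain ⟨t, htmem, htdist⟩ := h1 (1/4) (by norm_num)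
  obtain ⟨n, f, g, hsum⟩ := Submodule.mem_span_set'.mp htmem
  -- extract the inner product representatives
  choose x y hxy using fun i => (g i).2
  -- Step 2: polarization, define z i
  set z : Fin n → E := fun i => (starRingEnd ℂ (f i)) • x i + y i with hz
  set s : A := ∑ i, ⟪z i, z i⟫_A with hs
  have hssa : IsSelfAdjoint s := by
    rw [hs, IsSelfAdjoint, star_sum]
    simp [OldCStarModule.star_inner]
  -- t + star t ≤ s
  have hkey : t + star t ≤ s := by
    have hterm : ∀ i, f i • ⟪x i, y i⟫_A + star (f i • ⟪x i, y i⟫_A) ≤ ⟪z i, z i⟫_A := by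
      intro i
      have hexp : ⟪z i, z i⟫_A
          = ⟪(starRingEnd ℂ (f i)) • x i, (starRingEnd ℂ (f i)) • x i⟫_A
            + (f i • ⟪x i, y i⟫_A + star (f i • ⟪x i, y i⟫_A)) + ⟪y i, y i⟫_A := by
        simp only [hz, OldCStarModule.inner_add_right, old_inner_add_left,
          old_inner_smul_left_complex, OldCStarModule.inner_smul_right_complex,
          star_smul, OldCStarModule.star_inner]
        simp only [RingHom.coe_coe, starRingEnd_apply, star_star, smul_add]
        abel
      rw [hexp]
      have h1 : (0:A) ≤ ⟪(starRingEnd ℂ (f i)) • x i, (starRingEnd ℂ (f i)) • x i⟫_A :=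
        OldCStarModule.inner_self_nonneg
      have h2 : (0:A) ≤ ⟪y i, y i⟫_A := OldCStarModule.inner_self_nonneg
      calc f i • ⟪x i, y i⟫_A + star (f i • ⟪x i, y i⟫_A)
          ≤ ⟪(starRingEnd ℂ (f i)) • x i, (starRingEnd ℂ (f i)) • x i⟫_A
            + (f i • ⟪x i, y i⟫_A + star (f i • ⟪x i, y i⟫_A)) := by
            exact le_add_of_nonneg_left h1
        _ ≤ _ := le_add_of_nonneg_right h2
    have ht : t = ∑ i, f i • ⟪x i, y i⟫_A := by
      rw [← hsum]
      exact Finset.sum_congr rfl fun i _ => by rw [hxy i]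
    rw [ht, hs, star_sum, ← Finset.sum_add_distrib]
    exact Finset.sum_le_sum fun i _ => hterm i
  -- Step 3: (3/2) • 1 ≤ t + star t
  have halg2 : IsSelfAdjoint (algebraMap ℝ A 2) := by
    rw [IsSelfAdjoint, ← algebraMap_star_comm]
    simp
  have hv : IsSelfAdjoint (t + star t - algebraMap ℝ A 2) := by
    rw [IsSelfAdjoint, star_sub, star_add, star_star, halg2.star_eq, add_comm]
  have hnormv : ‖t + star t - algebraMap ℝ A 2‖ ≤ 1/2 := by
    have h1t : ‖(1 : A) - t‖ < 1/4 := by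
      rwa [← dist_eq_norm]
    have heq : t + star t - algebraMap ℝ A 2 = -(((1:A) - t) + star ((1:A) - t)) := by
      have h2 : algebraMap ℝ A 2 = 2 := map_ofNat _ 2
      simp only [star_sub, star_one, h2]
      have : (2:A) = 1 + 1 := by norm_num
      rw [this]
      abel
    rw [heq, norm_neg]
    calc ‖((1:A) - t) + star ((1:A) - t)‖ ≤ ‖(1:A) - t‖ + ‖star ((1:A) - t)‖ := norm_add_le _ _
      _ = ‖(1:A) - t‖ + ‖(1:A) - t‖ := by rw [norm_star]
      _ ≤ 1/4 + 1/4 := by linarith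
      _ = 1/2 := by norm_num
  have h32 : algebraMap ℝ A (3/2) ≤ t + star t := by
    have hlow := IsSelfAdjoint.neg_algebraMap_norm_le_self hv
    have hmap : algebraMap ℝ A ‖t + star t - algebraMap ℝ A 2‖ ≤ algebraMap ℝ A (1/2) := by
      rw [← sub_nonneg, ← map_sub]
      exact aux_algebraMap_nonneg (by linarith)
    have h3 : -(algebraMap ℝ A (1/2)) ≤ t + star t - algebraMap ℝ A 2 :=
      le_trans (neg_le_neg hmap) hlow
    have h4 := add_le_add_right h3 (algebraMap ℝ A 2)
    rw [add_sub_cancel] at h4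
    refine le_trans (le_of_eq ?_) h4
    rw [← map_neg, ← map_add]
    norm_num
  have hles : algebraMap ℝ A (3/2) ≤ s := le_trans h32 hkey
  -- Step 4: invert the square root of s
  obtain ⟨r, hrsa, hrs⟩ := aux_inv_sqrt hssa (aux_spectrum_Ici hles)
  -- Step 5: the elements e i
  refine ⟨n, fun i => z i <• r, ?_, ?_, ?_⟩
  · -- sum of inner products = 1
    have : ∀ i, ⟪z i <• r, z i <• r⟫_A = star r * ⟪z i, z i⟫_A * r := by
      intro i
      simp [old_inner_op_smul_left, OldCStarModule.inner_op_smul_right, mul_assoc]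
    simp only [this]
    rw [← Finset.sum_mul, ← Finset.mul_sum, ← hs, hrsa.star_eq, hrs]
  · -- inner product identity
    intro a b
    have hinner : ∀ i, ⟪(z i <• r) <• a, (z i <• r) <• b⟫_A
        = star a * (star r * ⟪z i, z i⟫_A * r) * b := by
      intro i
      simp [old_inner_op_smul_left, OldCStarModule.inner_op_smul_right, mul_assoc]
    rw [old_pi_inner]
    simp only [Equiv.apply_symm_apply, hinner]
    rw [← Finset.sum_mul, ← Finset.mul_sum, ← Finset.sum_mul, ← Finset.mul_sum, ← hs,
      hrsa.star_eq, hrs]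
    simp
  · -- isometry
    intro a
    have hsq : ‖(equiv A (Fin n → E)).symm (fun i => (z i <• r) <• a)‖ ^ 2 = ‖a‖ ^ 2 := by
      rw [old_pi_norm_sq]
      have hinner : ∀ i, ⟪(z i <• r) <• a, (z i <• r) <• a⟫_A
          = star a * (star r * ⟪z i, z i⟫_A * r) * a := by
        intro i
        simp [old_inner_op_smul_left, OldCStarModule.inner_op_smul_right, mul_assoc]
      rw [old_pi_inner]
      simp only [Equiv.apply_symm_apply, hinner]
      rw [← Finset.sum_mul, ← Finset.mul_sum, ← Finset.sum_mul, ← Finset.mul_sum, ← hs,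
        hrsa.star_eq, hrs]
      simp [CStarRing.norm_star_mul_self, sq]
    have h1 := abs_eq_abs.mpr (Or.inl (congrArg id hsq))
    exact (pow_left_inj₀ (Real.sqrt_nonneg _) (norm_nonneg a) two_ne_zero).mp hsq
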